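/- arXiv:1502.01287 — 4 statements merged into one kernel-verified Lean document; each statement's English description precedes it below -/
import Mathlib

section
/- The noncommuting graph of a finite nonabelian group is connected and has diameter at most 2. -/
open scoped Classical

/-- The noncommuting graph of a group `G`: vertices are the noncentral elements,
two vertices are adjacent when they do not commute. -/
def ncGraph (G : Type*) [Group G] : SimpleGraph {x : G // x ∉ Subgroup.center G} where
  Adj x y := (x : G) * y ≠ (y : G) * x
  symm := ⟨fun x y h he => h he.symm⟩
  loopless := ⟨fun x h => h rfl⟩

lemma nc_key {G : Type*} [Group G] (x y : G) (hx : x ∉ Subgroup.center G)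
    (hy : y ∉ Subgroup.center G) :
    ∃ z : G, z ∉ Subgroup.center G ∧ z * x ≠ x * z ∧ z * y ≠ y * z := by
  rw [Subgroup.mem_center_iff] at hx hy
  push_neg at hx hy
  obtain ⟨a, ha⟩ := hx
  obtain ⟨b, hb⟩ := hy
  by_cases hay : a * y = y * a
  · by_cases hbx : b * x = x * b
    · have hA : a * b * x ≠ x * (a * b) := by
        intro h
        apply ha
        have : (a * x) * b = (x * a) * b := by
          rw [mul_assoc, ← hbx, ← mul_assoc, h, mul_assoc]
        exact mul_right_cancel this
      have hB : a * b * y ≠ y * (a * b) := by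
        intro h
        apply hb
        have : a * (b * y) = a * (y * b) := by
          rw [← mul_assoc, h, ← mul_assoc, ← hay, mul_assoc]
        exact mul_left_cancel this
      refine ⟨a * b, ?_, hA, hB⟩
      rw [Subgroup.mem_center_iff]
      push_neg
      exact ⟨x, fun h => hA h.symm⟩
    · refine ⟨b, ?_, hbx, hb⟩
      rw [Subgroup.mem_center_iff]
      push_neg
      exact ⟨x, fun h => hbx h.symm⟩
  · refine ⟨a, ?_, ha, hay⟩
    rw [Subgroup.mem_center_iff]
    push_neg
    exact ⟨x, fun h => ha h.symm⟩

lemma nc_dist_le {G : Type*} [Group G]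
    (x y : {x : G // x ∉ Subgroup.center G}) :
    (ncGraph G).Reachable x y ∧ (ncGraph G).dist x y ≤ 2 := by
  by_cases hc : (x : G) * y = (y : G) * x
  · obtain ⟨z, hz, hzx, hzy⟩ := nc_key (x : G) (y : G) x.2 y.2
    have h1 : (ncGraph G).Adj x ⟨z, hz⟩ := fun h => hzx h.symm
    have h2 : (ncGraph G).Adj ⟨z, hz⟩ y := hzy
    refine ⟨(SimpleGraph.Walk.cons h1 (SimpleGraph.Walk.cons h2 SimpleGraph.Walk.nil)).reachable, ?_⟩
    have := SimpleGraph.dist_le (SimpleGraph.Walk.cons h1 (SimpleGraph.Walk.cons h2 SimpleGraph.Walk.nil))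
    simpa using this
  · have h : (ncGraph G).Adj x y := hc
    refine ⟨h.reachable, ?_⟩
    have := SimpleGraph.dist_le h.toWalk
    simp at this
    omega

theorem stmt1 {G : Type*} [Group G] [Fintype G]
    (hG : ∃ a b : G, a * b ≠ b * a) :
    (ncGraph G).Connected ∧
      ∀ x y : {x : G // x ∉ Subgroup.center G}, (ncGraph G).dist x y ≤ 2 := by
  obtain ⟨a, b, hab⟩ := hG
  have ha : a ∉ Subgroup.center G := by
    rw [Subgroup.mem_center_iff]
    push_neg
    exact ⟨b, fun h => hab h.symm⟩
  haveI : Nonempty {x : G // x ∉ Subgroup.center G} := ⟨⟨a, ha⟩⟩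
  exact ⟨SimpleGraph.Connected.mk (fun x y => (nc_dist_le x y).1),
    fun x y => (nc_dist_le x y).2⟩
end

section
/- Nash implies Sobolev on weighted graphs: let n > 2, p = 2n/(n−2), and suppose for all finitely supported f : V → ℝ the Nash inequality (Σ_x |f(x)|² μ_x)^{1+2/n} ≤ B · (Σ_{x∼y} |f(y)−f(x)|² σ_{xy}) · (Σ_x |f(x)| μ_x)^{4/n} holds. Then for all finitely supported f, (Σ_x |f(x)|^p μ_x)^{2/p} ≤ (2^p − 1)^{2/p} · 2^{2(p−1)} · B · Σ_{x∼y} |f(y)−f(x)|² σ_{xy}. -/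
open scoped Classical ENNReal NNReal

noncomputable def psiT (k : ℤ) (t : ℝ) : ℝ := min t ((2:ℝ)^k)

lemma psiT_nonneg {t : ℝ} (ht : 0 ≤ t) (k : ℤ) : 0 ≤ psiT k t :=
  le_min ht (by positivity)

lemma psiT_mono_arg (k : ℤ) {s t : ℝ} (h : t ≤ s) : psiT k t ≤ psiT k s :=
  min_le_min h le_rfl

lemma psiT_mono_k {k l : ℤ} (h : k ≤ l) (t : ℝ) : psiT k t ≤ psiT l t :=
  min_le_min le_rfl (by gcongr <;> norm_num)

lemma psiT_le_pow (k : ℤ) (t : ℝ) : psiT k t ≤ (2:ℝ)^k := min_le_right _ _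

lemma psiT_le_self (k : ℤ) (t : ℝ) : psiT k t ≤ t := min_le_left _ _

lemma psiT_zero (k : ℤ) : psiT k 0 = 0 := by
  simp [psiT, min_eq_left, le_of_lt (zpow_pos (by norm_num : (0:ℝ) < 2) k)]

lemma psiT_of_le {k : ℤ} {t : ℝ} (h : (2:ℝ)^k ≤ t) : psiT k t = (2:ℝ)^k :=
  min_eq_right h

lemma psiT_of_ge {k : ℤ} {t : ℝ} (h : t ≤ (2:ℝ)^k) : psiT k t = t := min_eq_left h

noncomputable def phiT (k : ℤ) (t : ℝ) : ℝ := psiT (k+1) t - psiT k t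

lemma phiT_nonneg (k : ℤ) (t : ℝ) : 0 ≤ phiT k t :=
  sub_nonneg.2 (psiT_mono_k (by omega) t)

lemma phiT_zero (k : ℤ) : phiT k 0 = 0 := by simp [phiT, psiT_zero]

lemma phiT_eq_pow {k : ℤ} {t : ℝ} (h : (2:ℝ)^(k+1) ≤ t) : phiT k t = (2:ℝ)^k := by
  have hk : (2:ℝ)^k ≤ t := le_trans (by gcongr <;> norm_num) h
  rw [phiT, psiT_of_le h, psiT_of_le hk]
  rw [zpow_add₀ (by norm_num : (2:ℝ) ≠ 0)]; ring

lemma phiT_eq_zero {k : ℤ} {t : ℝ} (h : t ≤ (2:ℝ)^k) : phiT k t = 0 := by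
  have : t ≤ (2:ℝ)^(k+1) := le_trans h (by gcongr <;> norm_num)
  rw [phiT, psiT_of_ge this, psiT_of_ge h, sub_self]

lemma phiT_le_pow (k : ℤ) {t : ℝ} (ht : 0 ≤ t) : phiT k t ≤ (2:ℝ)^k := by
  have h1 : psiT (k+1) t ≤ (2:ℝ)^(k+1) := psiT_le_pow _ _
  have h2 : 0 ≤ psiT k t := psiT_nonneg ht k
  have h3 : (2:ℝ)^(k+1) = 2 * (2:ℝ)^k := by
    rw [zpow_add₀ (by norm_num : (2:ℝ) ≠ 0)]; ring
  rcases le_total t ((2:ℝ)^k) with h4 | h4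
  · rw [phiT_eq_zero h4]; positivity
  · rw [phiT, psiT_of_le h4]; linarith

lemma phiT_mono_arg (k : ℤ) {s t : ℝ} (h : t ≤ s) : phiT k t ≤ phiT k s := by
  rcases le_total s ((2:ℝ)^k) with hs | hs
  · rw [phiT_eq_zero hs, phiT_eq_zero (le_trans h hs)]
  rcases le_total ((2:ℝ)^(k+1)) t with ht | ht
  · rw [phiT_eq_pow ht, phiT_eq_pow (le_trans ht h)]
  · -- t ≤ 2^(k+1)
    rw [phiT, phiT, psiT_of_ge ht]
    have : psiT k t ≤ psiT k s := psiT_mono_arg k h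
    have h2 : t - psiT k t ≤ psiT (k+1) s - psiT k s := by
      rcases le_total t ((2:ℝ)^k) with h3 | h3
      · rw [psiT_of_ge h3]; simp only [sub_self]
        exact sub_nonneg.2 (psiT_mono_k (k := k) (l := k+1) (by omega) s)
      · rw [psiT_of_le h3]
        rcases le_total s ((2:ℝ)^(k+1)) with h4 | h4
        · rw [psiT_of_ge h4, psiT_of_le (le_trans h3 h)]; linarith
        · rw [psiT_of_le h4, psiT_of_le (le_trans h3 h)]; linarith
    linarith

lemma Icc_succ_right_int (a b : ℤ) (h : a ≤ b + 1) :
    Finset.Icc a (b+1) = insert (b+1) (Finset.Icc a b) := by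
  ext k; simp only [Finset.mem_Icc, Finset.mem_insert]; omega

lemma sum_telescope_Icc (h : ℤ → ℝ) (a : ℤ) :
    ∀ b : ℤ, a - 1 ≤ b → ∑ k ∈ Finset.Icc a b, (h (k+1) - h k) = h (b+1) - h a := by
  refine Int.le_induction ?_ ?_
  · rw [Finset.Icc_eq_empty (by omega)]; simp
  · intro b hb ih
    rw [Icc_succ_right_int a b (by omega), Finset.sum_insert (by simp), ih]
    ring

/-- key per-edge estimate: sum over any finite set of levels of squared
truncation differences is at most the squared difference. -/
lemma sum_sq_phiT_le {s t : ℝ} (ht : 0 ≤ t) (hts : t ≤ s) (G : Finset ℤ) :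
    ∑ k ∈ G, (phiT k s - phiT k t)^2 ≤ (s - t)^2 := by
  rcases G.eq_empty_or_nonempty with rfl | hG
  · simp; positivity
  set h : ℤ → ℝ := fun k => psiT k s - psiT k t with hh
  have hd : ∀ k, phiT k s - phiT k t = h (k+1) - h k := by
    intro k; simp only [hh, phiT]; ring
  have hd0 : ∀ k, 0 ≤ h (k+1) - h k := by
    intro k; rw [← hd]; exact sub_nonneg.2 (phiT_mono_arg k hts)
  have hhub : ∀ k, h k ≤ s - t := by
    intro k
    simp only [hh]
    rcases le_total s ((2:ℝ)^k) with h1 | h1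
    · rw [psiT_of_ge h1, psiT_of_ge (le_trans hts h1)]
    · rw [psiT_of_le h1]
      rcases le_total t ((2:ℝ)^k) with h2 | h2
      · rw [psiT_of_ge h2]; linarith
      · rw [psiT_of_le h2]; linarith
  have hh0 : ∀ k, 0 ≤ h k := fun k => sub_nonneg.2 (psiT_mono_arg k hts)
  set a := G.min' hG
  set b := G.max' hG
  have hsub : G ⊆ Finset.Icc a b := fun k hk =>
    Finset.mem_Icc.2 ⟨G.min'_le k hk, G.le_max' k hk⟩
  have hab : a ≤ b := G.min'_le _ (G.max'_mem hG)
  have htel : ∑ k ∈ Finset.Icc a b, (h (k+1) - h k) = h (b+1) - h a :=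
    sum_telescope_Icc h a b (by omega)
  have hsum_d : ∑ k ∈ G, (h (k+1) - h k) ≤ s - t := by
    calc ∑ k ∈ G, (h (k+1) - h k) ≤ ∑ k ∈ Finset.Icc a b, (h (k+1) - h k) :=
          Finset.sum_le_sum_of_subset_of_nonneg hsub (fun k _ _ => hd0 k)
      _ = h (b+1) - h a := htel
      _ ≤ s - t := by linarith [hhub (b+1), hh0 a]
  calc ∑ k ∈ G, (phiT k s - phiT k t)^2
      ≤ ∑ k ∈ G, (s - t) * (phiT k s - phiT k t) := by
        refine Finset.sum_le_sum fun k _ => ?_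
        have h1 : 0 ≤ phiT k s - phiT k t := by rw [hd]; exact hd0 k
        have h2 : phiT k s - phiT k t ≤ s - t := by
          rw [hd]; have := hh0 k; linarith [hhub (k+1)]
        nlinarith
    _ = (s - t) * ∑ k ∈ G, (phiT k s - phiT k t) := by rw [Finset.mul_sum]
    _ ≤ (s - t) * (s - t) := by
        have : ∑ k ∈ G, (phiT k s - phiT k t) ≤ s - t := by
          simp only [hd]; exact hsum_d
        have hst : 0 ≤ s - t := by linarith
        nlinarith
    _ = (s - t)^2 := by ring

open ENNReal in
lemma rpow_two_eq_mul (x : ℝ≥0∞) : x^(2:ℝ) = x * x := by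
  rw [show (2:ℝ) = ((2:ℕ):ℝ) by norm_num, ENNReal.rpow_natCast]; ring

open ENNReal in
lemma tsum_sq_le_sq_tsum (x : ℕ → ℝ≥0∞) : ∑' j, (x j)^(2:ℝ) ≤ (∑' j, x j)^(2:ℝ) := by
  simp only [rpow_two_eq_mul]
  calc ∑' j, (x j) * (x j) ≤ ∑' j, (x j) * (∑' i, x i) :=
        ENNReal.tsum_le_tsum fun j => mul_le_mul_right (ENNReal.le_tsum j) _
    _ = (∑' j, x j) * (∑' i, x i) := ENNReal.tsum_mul_right

open ENNReal in
lemma tsum_holder {θ θ' : ℝ} (hθ : 1 < θ) (hc : θ⁻¹ + θ'⁻¹ = 1) (u v : ℕ → ℝ≥0∞) :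
    ∑' j, u j * v j ≤ (∑' j, (u j)^θ)^(1/θ) * (∑' j, (v j)^θ')^(1/θ') := by
  have hconj : Real.HolderConjugate θ θ' := Real.holderConjugate_iff.mpr ⟨hθ, hc⟩
  have := ENNReal.lintegral_mul_le_Lp_mul_Lq (MeasureTheory.Measure.count (α := ℕ)) hconj
    (f := u) (g := v) (measurable_of_countable u).aemeasurable (measurable_of_countable v).aemeasurable
  simpa [MeasureTheory.lintegral_count] using this

lemma chain_step {n p θ : ℝ} (hn : 2 < n) (hp : p = 2*n/(n-2)) (hθ : θ = 1 + 2/n)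
    {α β Ebd : ℝ} (hα : 0 ≤ α) (hβ : 0 ≤ β) (hE : 0 ≤ Ebd) (k : ℤ)
    (h : (((2:ℝ)^k)^2 * β)^θ ≤ Ebd * (((2:ℝ)^k) * α)^(4/n)) :
    (2:ℝ)^(p*((k:ℝ)+1)) * β ≤ (2:ℝ)^p * Ebd^(1/θ) * ((2:ℝ)^(p*(k:ℝ)) * α)^(4/(n*θ)) := by
  have hn0 : (0:ℝ) < n := by linarith
  have hθ0 : (0:ℝ) < θ := by rw [hθ]; positivity
  have h2nn : (0:ℝ) ≤ 2 := by norm_num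
  set κ := (k:ℝ) with hκ
  have hz : ((2:ℝ)^k) = (2:ℝ)^κ := (Real.rpow_intCast 2 k).symm
  have hrp : ∀ y : ℝ, (0:ℝ) < (2:ℝ)^y := fun y => Real.rpow_pos_of_pos (by norm_num) y
  -- normalize hypothesis
  have key : (2:ℝ)^(2*κ*θ) * β^θ ≤ Ebd * ((2:ℝ)^(κ*(4/n)) * α^(4/n)) := by
    have e1 : (((2:ℝ)^k)^2 * β)^θ = (2:ℝ)^(2*κ*θ) * β^θ := by
      rw [hz, ← Real.rpow_natCast ((2:ℝ)^κ) 2, ← Real.rpow_mul h2nn,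
          Real.mul_rpow (Real.rpow_nonneg h2nn _) hβ, ← Real.rpow_mul h2nn,
          show κ * ((2:ℕ):ℝ) * θ = 2*κ*θ by push_cast; ring]
    have e2 : (((2:ℝ)^k) * α)^(4/n) = (2:ℝ)^(κ*(4/n)) * α^(4/n) := by
      rw [hz, Real.mul_rpow (Real.rpow_nonneg h2nn _) hα, ← Real.rpow_mul h2nn]
    rw [← e1, ← e2]; exact h
  have hβθ : β^θ ≤ (2:ℝ)^(κ*(4/n) - 2*κ*θ) * (Ebd * α^(4/n)) := by
    have h5 := mul_le_mul_of_nonneg_left key (le_of_lt (hrp (-(2*κ*θ))))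
    calc β^θ = (2:ℝ)^(-(2*κ*θ)) * ((2:ℝ)^(2*κ*θ) * β^θ) := by
          rw [← mul_assoc, ← Real.rpow_add (by norm_num)]; simp
      _ ≤ (2:ℝ)^(-(2*κ*θ)) * (Ebd * ((2:ℝ)^(κ*(4/n)) * α^(4/n))) := h5
      _ = (2:ℝ)^(κ*(4/n) - 2*κ*θ) * (Ebd * α^(4/n)) := by
          rw [sub_eq_add_neg, add_comm, Real.rpow_add (by norm_num)]
          ring
  -- compare θ-th powers
  set T := (2:ℝ)^(p*(κ+1)) * β with hT
  set R := (2:ℝ)^p * Ebd^(1/θ) * ((2:ℝ)^(p*κ) * α)^(4/(n*θ)) with hR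
  have hTnn : 0 ≤ T := mul_nonneg (le_of_lt (hrp _)) hβ
  have hRnn : 0 ≤ R := by
    apply mul_nonneg (mul_nonneg (le_of_lt (hrp _)) (Real.rpow_nonneg hE _))
    exact Real.rpow_nonneg (mul_nonneg (le_of_lt (hrp _)) hα) _
  rw [← Real.rpow_le_rpow_iff hTnn hRnn hθ0]
  have hTθ : T^θ = (2:ℝ)^(p*(κ+1)*θ) * β^θ := by
    rw [hT, Real.mul_rpow (le_of_lt (hrp _)) hβ, ← Real.rpow_mul h2nn]
  have hRθ : R^θ = (2:ℝ)^(p*θ + p*κ*(4/n)) * (Ebd * α^(4/n)) := by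
    rw [hR, Real.mul_rpow (mul_nonneg (le_of_lt (hrp _)) (Real.rpow_nonneg hE _))
          (Real.rpow_nonneg (mul_nonneg (le_of_lt (hrp _)) hα) _),
        Real.mul_rpow (le_of_lt (hrp _)) (Real.rpow_nonneg hE _),
        ← Real.rpow_mul h2nn, ← Real.rpow_mul hE,
        ← Real.rpow_mul (mul_nonneg (le_of_lt (hrp _)) hα),
        one_div, inv_mul_cancel₀ (ne_of_gt hθ0), Real.rpow_one]
    have h4 : 4/(n*θ)*θ = 4/n := by field_simp
    rw [h4, Real.mul_rpow (le_of_lt (hrp _)) hα, ← Real.rpow_mul h2nn,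
        Real.rpow_add (by norm_num)]
    ring
  rw [hTθ, hRθ]
  calc (2:ℝ)^(p*(κ+1)*θ) * β^θ
      ≤ (2:ℝ)^(p*(κ+1)*θ) * ((2:ℝ)^(κ*(4/n) - 2*κ*θ) * (Ebd * α^(4/n))) := by
        exact mul_le_mul_of_nonneg_left hβθ (le_of_lt (hrp _))
    _ = (2:ℝ)^(p*(κ+1)*θ + (κ*(4/n) - 2*κ*θ)) * (Ebd * α^(4/n)) := by
        rw [Real.rpow_add (by norm_num)]; ring
    _ = (2:ℝ)^(p*θ + p*κ*(4/n)) * (Ebd * α^(4/n)) := by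
        have hne : n ≠ 0 := ne_of_gt hn0
        have hne2 : n - 2 ≠ 0 := by intro h0; rw [sub_eq_zero] at h0; linarith
        have hexp : p*(κ+1)*θ + (κ*(4/n) - 2*κ*θ) = p*θ + p*κ*(4/n) := by
          subst hp hθ; field_simp; ring
        rw [hexp]

theorem stmt11 {V : Type*} (Γ : SimpleGraph V) [∀ v, Fintype (Γ.neighborSet v)]
    (σ : V → V → ℝ)
    (hsymm : ∀ x y, σ x y = σ y x)
    (hpos : ∀ x y, Γ.Adj x y → 0 < σ x y)
    (μ : V → ℝ) (hμ : ∀ x, μ x = ∑ y ∈ Γ.neighborFinset x, σ x y)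
    (n p B : ℝ) (hn : 2 < n) (hp : p = 2 * n / (n - 2)) (hB : 0 < B)
    (hNash : ∀ f : V → ℝ, (Function.support f).Finite →
      (∑ᶠ x, |f x| ^ (2 : ℝ) * μ x) ^ (1 + 2 / n)
        ≤ B * (∑ᶠ x, ∑ y ∈ Γ.neighborFinset x, (f y - f x) ^ 2 * σ x y) *
            (∑ᶠ x, |f x| * μ x) ^ (4 / n)) :
    ∀ f : V → ℝ, (Function.support f).Finite →
      (∑ᶠ x, |f x| ^ p * μ x) ^ (2 / p)
        ≤ ((2 : ℝ) ^ p - 1) ^ (2 / p) * (2 : ℝ) ^ (2 * (p - 1)) * B *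
            ∑ᶠ x, ∑ y ∈ Γ.neighborFinset x, (f y - f x) ^ 2 * σ x y := by
  intro f hf
  classical
  have hn0 : (0:ℝ) < n := by linarith
  have hn2 : (0:ℝ) < n - 2 := by linarith
  have hppos : 0 < p := by rw [hp]; positivity
  set θ : ℝ := 1 + 2/n with hθdef
  have hθ1 : 1 < θ := by rw [hθdef]; have h2n : 0 < 2/n := by positivity
                         linarith
  have hθ0 : (0:ℝ) < θ := by linarith
  set θ' : ℝ := (n+2)/2 with hθ'def
  have hθ'0 : (0:ℝ) < θ' := by rw [hθ'def]; positivity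
  have hconj : θ⁻¹ + θ'⁻¹ = 1 := by
    rw [hθdef, hθ'def]; field_simp
  set g : V → ℝ := fun x => |f x| with hgdef
  have hg0 : ∀ x, 0 ≤ g x := fun x => abs_nonneg _
  set T : Finset V := hf.toFinset with hTdef
  have hgT : ∀ x, x ∉ T → f x = 0 := by
    intro x hx
    by_contra h
    exact hx (hf.mem_toFinset.2 h)
  obtain ⟨K, hK⟩ : ∃ K : ℤ, ∀ x, g x < (2:ℝ)^K := by
    obtain ⟨N, hN⟩ := pow_unbounded_of_one_lt (∑ x ∈ T, g x) (one_lt_two (α := ℝ))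
    refine ⟨(N:ℤ), fun x => ?_⟩
    rw [zpow_natCast]
    rcases em (x ∈ T) with hx | hx
    · exact lt_of_le_of_lt (Finset.single_le_sum (fun i _ => hg0 i) hx) hN
    · have hz : g x = 0 := by simp [hgdef, hgT x hx]
      rw [hz]; positivity
  have hμ0 : ∀ x, 0 ≤ μ x := by
    intro x; rw [hμ x]
    exact Finset.sum_nonneg fun y hy => le_of_lt (hpos x y ((Γ.mem_neighborFinset x y).1 hy))
  set b : ℤ → ℝ := fun k => ∑ x ∈ T.filter (fun x => (2:ℝ)^k ≤ g x), μ x with hbdef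
  have hb0 : ∀ k, 0 ≤ b k := fun k => Finset.sum_nonneg fun x _ => hμ0 x
  have hble : ∀ k, b k ≤ ∑ x ∈ T, μ x := fun k =>
    Finset.sum_le_sum_of_subset_of_nonneg (Finset.filter_subset _ _) (fun x _ _ => hμ0 x)
  set ftr : ℤ → V → ℝ := fun k x => phiT k (g x) with hftrdef
  have hftr_nonneg : ∀ k x, 0 ≤ ftr k x := fun k x => phiT_nonneg k (g x)
  have hftr_zero : ∀ k x, x ∉ T → ftr k x = 0 := by
    intro k x hx
    have : g x = 0 := by simp [hgdef, hgT x hx]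
    simp [hftrdef, this, phiT_zero]
  set T' : Finset V := T ∪ T.biUnion (fun x => Γ.neighborFinset x) with hT'def
  set Ener : (V → ℝ) → ℝ :=
    fun h => ∑ x ∈ T', ∑ y ∈ Γ.neighborFinset x, (h y - h x)^2 * σ x y with hEnerdef
  have hEner_nonneg : ∀ h, 0 ≤ Ener h := by
    intro h
    apply Finset.sum_nonneg; intro x _
    apply Finset.sum_nonneg; intro y hy
    have := hpos x y ((Γ.mem_neighborFinset x y).1 hy)
    positivity
  have hEfin : ∀ h : V → ℝ, (∀ x, h x ≠ 0 → x ∈ T) →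
      (∑ᶠ x, ∑ y ∈ Γ.neighborFinset x, (h y - h x)^2 * σ x y) = Ener h := by
    intro h hsupp
    apply finsum_eq_sum_of_support_subset
    intro x hx
    simp only [Function.mem_support] at hx
    by_contra hxT'
    apply hx
    have hxT : x ∉ T := fun hh => hxT' (Finset.mem_coe.2 (Finset.mem_union_left _ hh))
    have hx0 : h x = 0 := by
      by_contra hh; exact hxT (hsupp x hh)
    apply Finset.sum_eq_zero
    intro y hy
    have hyT : y ∉ T := by
      intro hyT
      apply hxT'
      apply Finset.mem_coe.2
      apply Finset.mem_union_right
      exact Finset.mem_biUnion.2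
        ⟨y, hyT, (Γ.mem_neighborFinset y x).2 (((Γ.mem_neighborFinset x y).1 hy).symm)⟩
    have hy0 : h y = 0 := by by_contra hh; exact hyT (hsupp y hh)
    rw [hx0, hy0]; ring
  have hstep : ∀ k : ℤ, (((2:ℝ)^k)^2 * b (k+1))^θ ≤
      (B * Ener (ftr k)) * (((2:ℝ)^k) * b k)^(4/n) := by
    intro k
    have hsupfin : (Function.support (ftr k)).Finite := by
      apply Set.Finite.subset hf
      intro x hx
      simp only [Function.mem_support] at hx
      by_contra hxs
      exact hx (hftr_zero k x (by simpa [hTdef, hf.mem_toFinset] using hxs))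
    have hN := hNash (ftr k) hsupfin
    have habs : ∀ x, |ftr k x| = ftr k x := fun x => abs_of_nonneg (hftr_nonneg k x)
    have h2 : (∑ᶠ x, |ftr k x| ^ (2:ℝ) * μ x) = ∑ x ∈ T, (ftr k x)^2 * μ x := by
      have hcg : ∀ x, |ftr k x| ^ (2:ℝ) * μ x = (ftr k x)^2 * μ x := by
        intro x
        rw [show (2:ℝ) = ((2:ℕ):ℝ) by norm_num, Real.rpow_natCast, sq_abs]
      rw [finsum_congr hcg]
      apply finsum_eq_sum_of_support_subset
      intro x hx
      simp only [Function.mem_support] at hx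
      by_contra hxT
      exact hx (by rw [hftr_zero k x hxT]; ring)
    have h1 : (∑ᶠ x, |ftr k x| * μ x) = ∑ x ∈ T, ftr k x * μ x := by
      rw [finsum_congr (fun x => by rw [habs x] : ∀ x, |ftr k x| * μ x = ftr k x * μ x)]
      apply finsum_eq_sum_of_support_subset
      intro x hx
      simp only [Function.mem_support] at hx
      by_contra hxT
      exact hx (by rw [hftr_zero k x hxT]; ring)
    have hE : (∑ᶠ x, ∑ y ∈ Γ.neighborFinset x, (ftr k y - ftr k x)^2 * σ x y)
        = Ener (ftr k) := by
      apply hEfin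
      intro x hx
      by_contra hxT
      exact hx (hftr_zero k x hxT)
    rw [h2, h1, hE] at hN
    have hlow : ((2:ℝ)^k)^2 * b (k+1) ≤ ∑ x ∈ T, (ftr k x)^2 * μ x := by
      calc ((2:ℝ)^k)^2 * b (k+1)
          = ∑ x ∈ T.filter (fun x => (2:ℝ)^(k+1) ≤ g x), ((2:ℝ)^k)^2 * μ x := by
            rw [Finset.mul_sum]
        _ = ∑ x ∈ T.filter (fun x => (2:ℝ)^(k+1) ≤ g x), (ftr k x)^2 * μ x := by
            apply Finset.sum_congr rfl
            intro x hx
            have hm := (Finset.mem_filter.1 hx).2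
            have : ftr k x = (2:ℝ)^k := phiT_eq_pow hm
            rw [this]
        _ ≤ ∑ x ∈ T, (ftr k x)^2 * μ x :=
            Finset.sum_le_sum_of_subset_of_nonneg (Finset.filter_subset _ _)
              (fun x _ _ => mul_nonneg (sq_nonneg _) (hμ0 x))
    have hup : ∑ x ∈ T, ftr k x * μ x ≤ (2:ℝ)^k * b k := by
      calc ∑ x ∈ T, ftr k x * μ x
          ≤ ∑ x ∈ T, (if (2:ℝ)^k ≤ g x then (2:ℝ)^k * μ x else 0) := by
            apply Finset.sum_le_sum
            intro x hx
            by_cases hc : (2:ℝ)^k ≤ g x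
            · rw [if_pos hc]
              exact mul_le_mul_of_nonneg_right (phiT_le_pow k (hg0 x)) (hμ0 x)
            · rw [if_neg hc]
              have h0 : ftr k x = 0 := phiT_eq_zero (le_of_lt (not_le.1 hc))
              rw [h0, zero_mul]
        _ = (2:ℝ)^k * b k := by
            rw [← Finset.sum_filter, Finset.mul_sum]
    have hl0 : 0 ≤ ∑ x ∈ T, ftr k x * μ x :=
      Finset.sum_nonneg fun x _ => mul_nonneg (hftr_nonneg k x) (hμ0 x)
    have hBE : 0 ≤ B * Ener (ftr k) := mul_nonneg (le_of_lt hB) (hEner_nonneg _)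
    calc (((2:ℝ)^k)^2 * b (k+1))^θ
        ≤ (∑ x ∈ T, (ftr k x)^2 * μ x)^θ :=
          Real.rpow_le_rpow (mul_nonneg (sq_nonneg _) (hb0 _)) hlow (le_of_lt hθ0)
      _ ≤ B * Ener (ftr k) * (∑ x ∈ T, ftr k x * μ x)^(4/n) := hN
      _ ≤ B * Ener (ftr k) * ((2:ℝ)^k * b k)^(4/n) := by
          apply mul_le_mul_of_nonneg_left _ hBE
          exact Real.rpow_le_rpow hl0 hup (by positivity)
  set cz : ℤ → ℝ := fun k => (2:ℝ)^(p*(k:ℝ)) * b k with hczdef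
  have hcz0 : ∀ k, 0 ≤ cz k := fun k =>
    mul_nonneg (Real.rpow_nonneg (by norm_num) _) (hb0 k)
  have hchainZ : ∀ k : ℤ, cz (k+1) ≤
      (2:ℝ)^p * (B * Ener (ftr k))^(1/θ) * (cz k)^(4/(n*θ)) := by
    intro k
    have h := chain_step hn hp hθdef (hb0 k) (hb0 (k+1))
      (mul_nonneg (le_of_lt hB) (hEner_nonneg _)) k (hstep k)
    have e1 : (((k+1:ℤ)):ℝ) = (k:ℝ) + 1 := by push_cast; ring
    show (2:ℝ)^(p*(((k+1:ℤ)):ℝ)) * b (k+1) ≤ _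
    rw [e1]
    exact h
  set A : ℕ → ℝ≥0∞ := fun j => ENNReal.ofReal (cz (K - (j:ℤ))) with hAdef
  set S : ℝ≥0∞ := ∑' j, A j with hSdef
  have hr1 : ENNReal.ofReal ((2:ℝ)^(-p)) < 1 := by
    rw [ENNReal.ofReal_lt_one]
    exact Real.rpow_lt_one_of_one_lt_of_neg one_lt_two (by linarith)
  have hS_top : S ≠ ⊤ := by
    have hb1 : ∀ j : ℕ, A j ≤ ENNReal.ofReal ((2:ℝ)^(p*(K:ℝ)) * (∑ x ∈ T, μ x)) *
        (ENNReal.ofReal ((2:ℝ)^(-p)))^j := by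
      intro j
      have hcz_le : cz (K - (j:ℤ)) ≤ ((2:ℝ)^(p*(K:ℝ)) * (∑ x ∈ T, μ x)) * ((2:ℝ)^(-p))^j := by
        have e : (2:ℝ)^(p*(((K - (j:ℤ)):ℤ):ℝ)) = (2:ℝ)^(p*(K:ℝ)) * ((2:ℝ)^(-p))^j := by
          rw [← Real.rpow_natCast ((2:ℝ)^(-p)) j, ← Real.rpow_mul (by norm_num : (0:ℝ) ≤ 2),
            ← Real.rpow_add (by norm_num : (0:ℝ) < 2)]
          congr 1
          push_cast; ring
        show (2:ℝ)^(p*(((K - (j:ℤ)):ℤ):ℝ)) * b (K - (j:ℤ)) ≤ _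
        rw [e]
        have h1 : 0 ≤ (2:ℝ)^(p*(K:ℝ)) * ((2:ℝ)^(-p))^j := by positivity
        calc (2:ℝ)^(p*(K:ℝ)) * ((2:ℝ)^(-p))^j * b (K - (j:ℤ))
            ≤ (2:ℝ)^(p*(K:ℝ)) * ((2:ℝ)^(-p))^j * (∑ x ∈ T, μ x) :=
              mul_le_mul_of_nonneg_left (hble _) h1
          _ = (2:ℝ)^(p*(K:ℝ)) * (∑ x ∈ T, μ x) * ((2:ℝ)^(-p))^j := by ring
      calc A j ≤ ENNReal.ofReal (((2:ℝ)^(p*(K:ℝ)) * (∑ x ∈ T, μ x)) * ((2:ℝ)^(-p))^j) :=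
            ENNReal.ofReal_le_ofReal hcz_le
        _ = ENNReal.ofReal ((2:ℝ)^(p*(K:ℝ)) * (∑ x ∈ T, μ x)) *
              (ENNReal.ofReal ((2:ℝ)^(-p)))^j := by
            rw [ENNReal.ofReal_mul (mul_nonneg (Real.rpow_nonneg (by norm_num) _)
              (Finset.sum_nonneg fun x _ => hμ0 x)), ENNReal.ofReal_pow (by positivity)]
    have hSle' : S ≤ ENNReal.ofReal ((2:ℝ)^(p*(K:ℝ)) * (∑ x ∈ T, μ x)) *
        (1 - ENNReal.ofReal ((2:ℝ)^(-p)))⁻¹ := by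
      rw [hSdef]
      calc ∑' j, A j ≤ ∑' j, ENNReal.ofReal ((2:ℝ)^(p*(K:ℝ)) * (∑ x ∈ T, μ x)) *
            (ENNReal.ofReal ((2:ℝ)^(-p)))^j := ENNReal.tsum_le_tsum hb1
        _ = ENNReal.ofReal ((2:ℝ)^(p*(K:ℝ)) * (∑ x ∈ T, μ x)) *
            (1 - ENNReal.ofReal ((2:ℝ)^(-p)))⁻¹ := by
            rw [ENNReal.tsum_mul_left, ENNReal.tsum_geometric]
    apply ne_top_of_le_ne_top _ hSle'
    apply ENNReal.mul_ne_top ENNReal.ofReal_ne_top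
    rw [ENNReal.inv_ne_top]
    intro hc
    rw [tsub_eq_zero_iff_le] at hc
    exact absurd hc (not_le.2 hr1)
  set Ek : ℕ → ℝ := fun j => Ener (ftr (K - 1 - (j:ℤ))) with hEkdef
  have hEk0 : ∀ j, 0 ≤ Ek j := fun j => hEner_nonneg _
  have hEtot_sum : ∑' j, ENNReal.ofReal (Ek j) ≤ ENNReal.ofReal (Ener f) := by
    have hterm0 : ∀ (h : V → ℝ) (x y : V), y ∈ Γ.neighborFinset x →
        0 ≤ (h y - h x)^2 * σ x y := fun h x y hy =>
      mul_nonneg (sq_nonneg _) (le_of_lt (hpos x y ((Γ.mem_neighborFinset x y).1 hy)))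
    have e1 : ∀ j : ℕ, ENNReal.ofReal (Ek j) = ∑ x ∈ T', ∑ y ∈ Γ.neighborFinset x,
        ENNReal.ofReal ((ftr (K-1-(j:ℤ)) y - ftr (K-1-(j:ℤ)) x)^2 * σ x y) := by
      intro j
      show ENNReal.ofReal (∑ x ∈ T', ∑ y ∈ Γ.neighborFinset x,
        (ftr (K-1-(j:ℤ)) y - ftr (K-1-(j:ℤ)) x)^2 * σ x y) = _
      rw [ENNReal.ofReal_sum_of_nonneg
        (fun x _ => Finset.sum_nonneg (fun y hy => hterm0 _ x y hy))]
      exact Finset.sum_congr rfl fun x _ =>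
        ENNReal.ofReal_sum_of_nonneg (fun y hy => hterm0 _ x y hy)
    calc ∑' j, ENNReal.ofReal (Ek j)
        = ∑' (j:ℕ), ∑ x ∈ T', ∑ y ∈ Γ.neighborFinset x,
            ENNReal.ofReal ((ftr (K-1-(j:ℤ)) y - ftr (K-1-(j:ℤ)) x)^2 * σ x y) := tsum_congr e1
      _ = ∑ x ∈ T', ∑' (j:ℕ), ∑ y ∈ Γ.neighborFinset x,
            ENNReal.ofReal ((ftr (K-1-(j:ℤ)) y - ftr (K-1-(j:ℤ)) x)^2 * σ x y) :=
          Summable.tsum_finsetSum (fun _ _ => ENNReal.summable)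
      _ = ∑ x ∈ T', ∑ y ∈ Γ.neighborFinset x, ∑' (j:ℕ),
            ENNReal.ofReal ((ftr (K-1-(j:ℤ)) y - ftr (K-1-(j:ℤ)) x)^2 * σ x y) :=
          Finset.sum_congr rfl fun x _ => Summable.tsum_finsetSum (fun _ _ => ENNReal.summable)
      _ ≤ ∑ x ∈ T', ∑ y ∈ Γ.neighborFinset x, ENNReal.ofReal ((f y - f x)^2 * σ x y) := by
          apply Finset.sum_le_sum; intro x _
          apply Finset.sum_le_sum; intro y hy
          have hσ0 : 0 ≤ σ x y := le_of_lt (hpos x y ((Γ.mem_neighborFinset x y).1 hy))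
          have hper : ∀ j:ℕ,
              ENNReal.ofReal ((ftr (K-1-(j:ℤ)) y - ftr (K-1-(j:ℤ)) x)^2 * σ x y)
              = ENNReal.ofReal ((ftr (K-1-(j:ℤ)) y - ftr (K-1-(j:ℤ)) x)^2) *
                ENNReal.ofReal (σ x y) :=
            fun j => ENNReal.ofReal_mul (sq_nonneg _)
          rw [tsum_congr hper, ENNReal.tsum_mul_right]
          have hgf : ∀ G : Finset ℤ, ∑ k ∈ G, (ftr k y - ftr k x)^2 ≤ (g y - g x)^2 := by
            intro G
            rcases le_total (g x) (g y) with hc | hc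
            · exact sum_sq_phiT_le (hg0 x) hc G
            · have hsw : ∀ k, (ftr k y - ftr k x)^2 = (ftr k x - ftr k y)^2 := fun k => by ring
              rw [Finset.sum_congr rfl fun k _ => hsw k,
                show (g y - g x)^2 = (g x - g y)^2 by ring]
              exact sum_sq_phiT_le (hg0 y) hc _
          have hcore : ∑' (j:ℕ), ENNReal.ofReal ((ftr (K-1-(j:ℤ)) y - ftr (K-1-(j:ℤ)) x)^2)
              ≤ ENNReal.ofReal ((f y - f x)^2) := by
            rw [ENNReal.tsum_eq_iSup_sum]
            apply iSup_le
            intro F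
            rw [← ENNReal.ofReal_sum_of_nonneg (fun j _ => sq_nonneg _)]
            apply ENNReal.ofReal_le_ofReal
            have himg : ∑ j ∈ F, (ftr (K-1-(j:ℤ)) y - ftr (K-1-(j:ℤ)) x)^2
                = ∑ k ∈ F.image (fun j : ℕ => K-1-(j:ℤ)), (ftr k y - ftr k x)^2 :=
              (Finset.sum_image (g := fun j : ℕ => K-1-(j:ℤ)) (f := fun k => (ftr k y - ftr k x)^2) (by intro a ha c hc hac; dsimp only at hac; omega)).symm
            rw [himg]
            calc ∑ k ∈ F.image (fun j : ℕ => K-1-(j:ℤ)), (ftr k y - ftr k x)^2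
                ≤ (g y - g x)^2 := hgf _
              _ ≤ (f y - f x)^2 := by
                  have h1 : |g y - g x| ≤ |f y - f x| := abs_abs_sub_abs_le_abs_sub _ _
                  calc (g y - g x)^2 = |g y - g x|^2 := (sq_abs _).symm
                    _ ≤ |f y - f x|^2 := by
                        nlinarith [abs_nonneg (g y - g x), abs_nonneg (f y - f x)]
                    _ = (f y - f x)^2 := sq_abs _
          calc (∑' (j:ℕ), ENNReal.ofReal ((ftr (K-1-(j:ℤ)) y - ftr (K-1-(j:ℤ)) x)^2)) *
                ENNReal.ofReal (σ x y)
              ≤ ENNReal.ofReal ((f y - f x)^2) * ENNReal.ofReal (σ x y) :=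
                mul_le_mul_left hcore _
            _ = ENNReal.ofReal ((f y - f x)^2 * σ x y) := (ENNReal.ofReal_mul (sq_nonneg _)).symm
      _ = ENNReal.ofReal (Ener f) := by
          show _ = ENNReal.ofReal (∑ x ∈ T', ∑ y ∈ Γ.neighborFinset x, (f y - f x)^2 * σ x y)
          rw [ENNReal.ofReal_sum_of_nonneg
            (fun x _ => Finset.sum_nonneg (fun y hy => hterm0 f x y hy))]
          exact (Finset.sum_congr rfl fun x _ =>
            ENNReal.ofReal_sum_of_nonneg (fun y hy => hterm0 f x y hy)).symm
  have hBEk0 : ∀ j:ℕ, 0 ≤ B * Ek j := fun j => mul_nonneg hB.le (hEk0 j)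
  have hU : ∀ j:ℕ, A j ≤ ENNReal.ofReal ((2:ℝ)^p) *
      ((ENNReal.ofReal (B * Ek j))^(1/θ) * (A (j+1))^(4/(n*θ))) := by
    intro j
    have hk := hchainZ (K - 1 - (j:ℤ))
    rw [show K - 1 - (j:ℤ) + 1 = K - (j:ℤ) from by ring] at hk
    have hA1 : A (j+1) = ENNReal.ofReal (cz (K - 1 - (j:ℤ))) := by
      show ENNReal.ofReal (cz (K - ((j+1:ℕ):ℤ))) = _
      congr 2
      push_cast; ring
    calc A j = ENNReal.ofReal (cz (K - (j:ℤ))) := rfl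
      _ ≤ ENNReal.ofReal ((2:ℝ)^p * (B * Ek j)^(1/θ) * (cz (K - 1 - (j:ℤ)))^(4/(n*θ))) :=
          ENNReal.ofReal_le_ofReal hk
      _ = ENNReal.ofReal ((2:ℝ)^p) * (ENNReal.ofReal ((B * Ek j)^(1/θ)) *
            ENNReal.ofReal ((cz (K - 1 - (j:ℤ)))^(4/(n*θ)))) := by
          rw [ENNReal.ofReal_mul (mul_nonneg (Real.rpow_nonneg (by norm_num) _)
              (Real.rpow_nonneg (hBEk0 j) _)),
            ENNReal.ofReal_mul (Real.rpow_nonneg (by norm_num) _)]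
          ring
      _ = ENNReal.ofReal ((2:ℝ)^p) *
            ((ENNReal.ofReal (B * Ek j))^(1/θ) * (A (j+1))^(4/(n*θ))) := by
          rw [hA1, ENNReal.ofReal_rpow_of_nonneg (hBEk0 j) (by positivity),
            ENNReal.ofReal_rpow_of_nonneg (hcz0 _) (by positivity)]
  have hsucc : ∑' (j:ℕ), A (j+1) ≤ S :=
    ENNReal.tsum_comp_le_tsum_of_injective (add_left_injective 1) A
  have hexp2 : (4/(n*θ))*θ' = 2 := by
    rw [hθdef, hθ'def]; field_simp; ring
  have hSle : S ≤ ENNReal.ofReal ((2:ℝ)^p) * (ENNReal.ofReal (B * Ener f))^(1/θ) * S^(2/θ') := by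
    calc S ≤ ∑' j, ENNReal.ofReal ((2:ℝ)^p) *
          ((ENNReal.ofReal (B * Ek j))^(1/θ) * (A (j+1))^(4/(n*θ))) := ENNReal.tsum_le_tsum hU
      _ = ENNReal.ofReal ((2:ℝ)^p) *
          ∑' j, (ENNReal.ofReal (B * Ek j))^(1/θ) * (A (j+1))^(4/(n*θ)) := ENNReal.tsum_mul_left
      _ ≤ ENNReal.ofReal ((2:ℝ)^p) *
          ((∑' j, ((ENNReal.ofReal (B * Ek j))^(1/θ))^θ)^(1/θ) *
           (∑' j, ((A (j+1))^(4/(n*θ)))^θ')^(1/θ')) :=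
          mul_le_mul_right (tsum_holder hθ1 hconj _ _) _
      _ ≤ ENNReal.ofReal ((2:ℝ)^p) *
          ((ENNReal.ofReal (B * Ener f))^(1/θ) * S^(2/θ')) := by
          apply mul_le_mul_right
          apply mul_le_mul'
          · -- first factor
            have e1 : ∀ j:ℕ, ((ENNReal.ofReal (B * Ek j))^(1/θ))^θ = ENNReal.ofReal (B * Ek j) := by
              intro j
              rw [← ENNReal.rpow_mul, one_div, inv_mul_cancel₀ (ne_of_gt hθ0), ENNReal.rpow_one]
            rw [tsum_congr e1]
            apply ENNReal.rpow_le_rpow _ (by positivity)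
            calc ∑' j, ENNReal.ofReal (B * Ek j)
                = ENNReal.ofReal B * ∑' j, ENNReal.ofReal (Ek j) := by
                  rw [← ENNReal.tsum_mul_left]
                  exact tsum_congr fun j => ENNReal.ofReal_mul hB.le
              _ ≤ ENNReal.ofReal B * ENNReal.ofReal (Ener f) := mul_le_mul_right hEtot_sum _
              _ = ENNReal.ofReal (B * Ener f) := (ENNReal.ofReal_mul hB.le).symm
          · -- second factor
            have e2 : ∀ j:ℕ, ((A (j+1))^(4/(n*θ)))^θ' = (A (j+1))^(2:ℝ) := by
              intro j
              rw [← ENNReal.rpow_mul, hexp2]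
            rw [tsum_congr e2]
            calc (∑' j, (A (j+1))^(2:ℝ))^(1/θ')
                ≤ ((∑' j, A (j+1))^(2:ℝ))^(1/θ') :=
                  ENNReal.rpow_le_rpow (tsum_sq_le_sq_tsum _) (by positivity)
              _ ≤ (S^(2:ℝ))^(1/θ') :=
                  ENNReal.rpow_le_rpow (ENNReal.rpow_le_rpow hsucc (by norm_num)) (by positivity)
              _ = S^(2/θ') := by
                  rw [← ENNReal.rpow_mul]
                  congr 1
                  field_simp
      _ = ENNReal.ofReal ((2:ℝ)^p) * (ENNReal.ofReal (B * Ener f))^(1/θ) * S^(2/θ') := by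
          ring
  have hne1 : n ≠ 0 := ne_of_gt hn0
  have hne2 : n + 2 ≠ 0 := by positivity
  have hne3 : n - 2 ≠ 0 := ne_of_gt hn2
  have hSfin : S^(2/p) ≤ ENNReal.ofReal ((2:ℝ)^(2*(p-1)) * (B * Ener f)) := by
    rcases eq_or_ne S 0 with hS0 | hS0
    · rw [hS0, ENNReal.zero_rpow_of_pos (by positivity)]
      exact zero_le
    · have hSp_ne0 : S^(2/θ') ≠ 0 := by
        simp [ENNReal.rpow_eq_zero_iff, hS0, hS_top]
      have hSp_netop : S^(2/θ') ≠ ⊤ := by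
        simp [ENNReal.rpow_eq_top_iff, hS0, hS_top]
      have hkey : S^((n-2)/(n+2)) * S^(2/θ') ≤
          (ENNReal.ofReal ((2:ℝ)^p) * (ENNReal.ofReal (B * Ener f))^(1/θ)) * S^(2/θ') := by
        have hSS : S^((n-2)/(n+2)) * S^(2/θ') = S := by
          rw [← ENNReal.rpow_add _ _ hS0 hS_top,
            show (n-2)/(n+2) + 2/θ' = 1 from by rw [hθ'def]; field_simp; ring,
            ENNReal.rpow_one]
        rw [hSS]
        exact hSle
      have hdiv := (ENNReal.mul_le_mul_iff_left hSp_ne0 hSp_netop).1 hkey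
      have hrp := ENNReal.rpow_le_rpow hdiv (le_of_lt hθ0)
      calc S^(2/p) = (S^((n-2)/(n+2)))^θ := by
            rw [← ENNReal.rpow_mul]
            congr 1
            rw [hp, hθdef]; field_simp
        _ ≤ (ENNReal.ofReal ((2:ℝ)^p) * (ENNReal.ofReal (B * Ener f))^(1/θ))^θ := hrp
        _ = (ENNReal.ofReal ((2:ℝ)^p))^θ * ((ENNReal.ofReal (B * Ener f))^(1/θ))^θ :=
            ENNReal.mul_rpow_of_nonneg _ _ (le_of_lt hθ0)
        _ = ENNReal.ofReal (((2:ℝ)^p)^θ) * ENNReal.ofReal (B * Ener f) := by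
            rw [ENNReal.ofReal_rpow_of_nonneg (by positivity) (le_of_lt hθ0),
              ← ENNReal.rpow_mul, one_div, inv_mul_cancel₀ (ne_of_gt hθ0), ENNReal.rpow_one]
        _ = ENNReal.ofReal ((2:ℝ)^(2*(p-1)) * (B * Ener f)) := by
            rw [← ENNReal.ofReal_mul (by positivity)]
            congr 2
            rw [← Real.rpow_mul (by norm_num : (0:ℝ) ≤ 2)]
            congr 1
            rw [hp, hθdef]; field_simp; ring
  have h2p1 : (0:ℝ) ≤ (2:ℝ)^p - 1 := by
    have h1 : (2:ℝ)^(0:ℝ) ≤ 2^p := Real.rpow_le_rpow_of_exponent_le one_le_two (le_of_lt hppos)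
    rw [Real.rpow_zero] at h1
    linarith
  have hlt1 : (2:ℝ)^(-p) < 1 := Real.rpow_lt_one_of_one_lt_of_neg one_lt_two (by linarith)
  have h2pn0 : (0:ℝ) < 1 - (2:ℝ)^(-p) := by linarith
  have hinv : (1 - ENNReal.ofReal ((2:ℝ)^(-p)))⁻¹ = ENNReal.ofReal ((1 - (2:ℝ)^(-p))⁻¹) := by
    rw [ENNReal.ofReal_inv_of_pos h2pn0, ENNReal.ofReal_sub 1 (by positivity), ENNReal.ofReal_one]
  have hkeyr : ((2:ℝ)^p - 1) * (1 - (2:ℝ)^(-p))⁻¹ = 2^p := by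
    rw [mul_inv_eq_iff_eq_mul₀ (ne_of_gt h2pn0)]
    have hm1 : (2:ℝ)^p * (2:ℝ)^(-p) = 1 := by
      rw [← Real.rpow_add (by norm_num : (0:ℝ) < 2)]; simp
    rw [mul_sub, mul_one, hm1]
  have hbmul : ∀ (k:ℤ) (C:ℝ), C * b k = ∑ x ∈ T, (if (2:ℝ)^k ≤ g x then C * μ x else 0) := by
    intro k C
    show C * ∑ x ∈ T.filter (fun x => (2:ℝ)^k ≤ g x), μ x = _
    rw [Finset.mul_sum, Finset.sum_filter]
  have hLHS : ENNReal.ofReal (∑ x ∈ T, (g x)^p * μ x) ≤ ENNReal.ofReal ((2:ℝ)^p - 1) * S := by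
    have hifnn : ∀ (k:ℤ) (C:ℝ), 0 ≤ C → ∀ x ∈ T, 0 ≤ (if (2:ℝ)^k ≤ g x then C * μ x else 0) := by
      intro k C hC x _
      split_ifs
      · exact mul_nonneg hC (hμ0 x)
      · exact le_rfl
    have hAexp : ∀ j:ℕ, A j = ∑ x ∈ T,
        ENNReal.ofReal (if (2:ℝ)^(K - (j:ℤ)) ≤ g x
          then (2:ℝ)^(p*(((K - (j:ℤ)):ℤ):ℝ)) * μ x else 0) := by
      intro j
      show ENNReal.ofReal ((2:ℝ)^(p*(((K - (j:ℤ)):ℤ):ℝ)) * b (K - (j:ℤ))) = _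
      rw [hbmul]
      exact ENNReal.ofReal_sum_of_nonneg
        (hifnn _ _ (Real.rpow_nonneg (by norm_num) _))
    have hSexp : S = ∑ x ∈ T, ∑' (j:ℕ),
        ENNReal.ofReal (if (2:ℝ)^(K - (j:ℤ)) ≤ g x
          then (2:ℝ)^(p*(((K - (j:ℤ)):ℤ):ℝ)) * μ x else 0) := by
      rw [hSdef, tsum_congr hAexp]
      exact Summable.tsum_finsetSum (fun _ _ => ENNReal.summable)
    rw [hSexp, ENNReal.ofReal_sum_of_nonneg
      (fun x _ => mul_nonneg (Real.rpow_nonneg (hg0 x) p) (hμ0 x)), Finset.mul_sum]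
    apply Finset.sum_le_sum
    intro x hxT
    have hgx0 : 0 < g x := abs_pos.2 (hf.mem_toFinset.1 hxT)
    obtain ⟨m, hm1, hm2⟩ := exists_mem_Ico_zpow hgx0 (one_lt_two (α := ℝ))
    have hmK : m + 1 ≤ K := by
      by_contra hmk
      push_neg at hmk
      have : (2:ℝ)^K ≤ 2^m := zpow_le_zpow_right₀ one_le_two (by omega)
      linarith [hK x, hm1]
    set jx : ℕ := (K - m - 1).toNat with hjxdef
    have hjx : (jx:ℤ) = K - m - 1 := Int.toNat_of_nonneg (by omega)
    have htail : ∑' (i:ℕ), ENNReal.ofReal ((2:ℝ)^(p*((m:ℝ) - (i:ℕ))) * μ x)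
        ≤ ∑' (j:ℕ), ENNReal.ofReal (if (2:ℝ)^(K - (j:ℤ)) ≤ g x
            then (2:ℝ)^(p*(((K - (j:ℤ)):ℤ):ℝ)) * μ x else 0) := by
      have hinj : Function.Injective (fun i : ℕ => jx + 1 + i) := fun a c hac => by
        dsimp only at hac; omega
      have hcomp := ENNReal.tsum_comp_le_tsum_of_injective hinj
        (fun j => ENNReal.ofReal (if (2:ℝ)^(K - (j:ℤ)) ≤ g x
          then (2:ℝ)^(p*(((K - (j:ℤ)):ℤ):ℝ)) * μ x else 0))
      refine le_trans (le_of_eq ?_) hcomp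
      apply tsum_congr
      intro i
      have hidx : K - ((jx + 1 + i : ℕ):ℤ) = m - (i:ℤ) := by omega
      have hcond : (2:ℝ)^(K - ((jx + 1 + i : ℕ):ℤ)) ≤ g x := by
        rw [hidx]
        calc (2:ℝ)^(m - (i:ℤ)) ≤ 2^m := zpow_le_zpow_right₀ one_le_two (by omega)
          _ ≤ g x := hm1
      show _ = ENNReal.ofReal (if (2:ℝ)^(K - ((jx + 1 + i : ℕ):ℤ)) ≤ g x
          then (2:ℝ)^(p*(((K - ((jx + 1 + i : ℕ):ℤ)):ℤ):ℝ)) * μ x else 0)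
      rw [if_pos hcond]
      congr 2
      rw [hidx]
      push_cast
      ring
    have hgeo : ∑' (i:ℕ), ENNReal.ofReal ((2:ℝ)^(p*((m:ℝ) - (i:ℕ))) * μ x)
        = ENNReal.ofReal ((2:ℝ)^(p*(m:ℝ)) * μ x) * (1 - ENNReal.ofReal ((2:ℝ)^(-p)))⁻¹ := by
      have hterm : ∀ i:ℕ, ENNReal.ofReal ((2:ℝ)^(p*((m:ℝ) - (i:ℕ))) * μ x)
          = ENNReal.ofReal ((2:ℝ)^(p*(m:ℝ)) * μ x) * (ENNReal.ofReal ((2:ℝ)^(-p)))^i := by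
        intro i
        have hr : (2:ℝ)^(p*((m:ℝ) - (i:ℕ))) * μ x
            = ((2:ℝ)^(p*(m:ℝ)) * μ x) * ((2:ℝ)^(-p))^i := by
          rw [← Real.rpow_natCast ((2:ℝ)^(-p)) i, ← Real.rpow_mul (by norm_num : (0:ℝ) ≤ 2),
            show p*((m:ℝ) - (i:ℕ)) = p*(m:ℝ) + -p*(i:ℕ) from by push_cast; ring,
            Real.rpow_add (by norm_num : (0:ℝ) < 2)]
          ring
        rw [hr, ENNReal.ofReal_mul (mul_nonneg (Real.rpow_nonneg (by norm_num) _) (hμ0 x)),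
          ENNReal.ofReal_pow (Real.rpow_nonneg (by norm_num) _)]
      rw [tsum_congr hterm, ENNReal.tsum_mul_left, ENNReal.tsum_geometric]
    calc ENNReal.ofReal ((g x)^p * μ x)
        ≤ ENNReal.ofReal ((2:ℝ)^(p*((m:ℝ)+1)) * μ x) := by
          apply ENNReal.ofReal_le_ofReal
          apply mul_le_mul_of_nonneg_right _ (hμ0 x)
          calc (g x)^p ≤ ((2:ℝ)^(m+1))^p :=
                Real.rpow_le_rpow (hg0 x) (le_of_lt hm2) (le_of_lt hppos)
            _ = (2:ℝ)^(p*((m:ℝ)+1)) := by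
                rw [← Real.rpow_intCast 2 (m+1), ← Real.rpow_mul (by norm_num : (0:ℝ) ≤ 2)]
                congr 1
                push_cast
                ring
      _ = ENNReal.ofReal ((2:ℝ)^p - 1) *
            (ENNReal.ofReal ((2:ℝ)^(p*(m:ℝ)) * μ x) * (1 - ENNReal.ofReal ((2:ℝ)^(-p)))⁻¹) := by
          rw [hinv, ← ENNReal.ofReal_mul (mul_nonneg (Real.rpow_nonneg (by norm_num) _) (hμ0 x)),
            ← ENNReal.ofReal_mul h2p1]
          congr 1
          calc (2:ℝ)^(p*((m:ℝ)+1)) * μ x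
              = ((2:ℝ)^p) * ((2:ℝ)^(p*(m:ℝ)) * μ x) := by
                rw [show p*((m:ℝ)+1) = p*(m:ℝ) + p from by ring,
                  Real.rpow_add (by norm_num : (0:ℝ) < 2)]
                ring
            _ = (((2:ℝ)^p - 1) * (1 - (2:ℝ)^(-p))⁻¹) * ((2:ℝ)^(p*(m:ℝ)) * μ x) := by
                rw [hkeyr]
            _ = ((2:ℝ)^p - 1) * ((2:ℝ)^(p*(m:ℝ)) * μ x * (1 - (2:ℝ)^(-p))⁻¹) := by ring
      _ ≤ ENNReal.ofReal ((2:ℝ)^p - 1) * ∑' (j:ℕ),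
            ENNReal.ofReal (if (2:ℝ)^(K - (j:ℤ)) ≤ g x
              then (2:ℝ)^(p*(((K - (j:ℤ)):ℤ):ℝ)) * μ x else 0) := by
          apply mul_le_mul_right
          rw [← hgeo]
          exact htail
  have hgoalL : (∑ᶠ x, |f x| ^ p * μ x) = ∑ x ∈ T, (g x)^p * μ x := by
    apply finsum_eq_sum_of_support_subset
    intro x hx
    simp only [Function.mem_support] at hx
    by_contra hxT
    apply hx
    rw [show |f x| = g x from rfl]
    have : g x = 0 := by simp [hgdef, hgT x hxT]
    rw [this, Real.zero_rpow (ne_of_gt hppos), zero_mul]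
  have hgoalR : (∑ᶠ x, ∑ y ∈ Γ.neighborFinset x, (f y - f x)^2 * σ x y) = Ener f :=
    hEfin f (fun x hx => hf.mem_toFinset.2 hx)
  rw [hgoalL, hgoalR]
  have hL0 : 0 ≤ ∑ x ∈ T, (g x)^p * μ x :=
    Finset.sum_nonneg fun x _ => mul_nonneg (Real.rpow_nonneg (hg0 x) p) (hμ0 x)
  have h2p1 : (0:ℝ) ≤ (2:ℝ)^p - 1 := by
    have h1 : (2:ℝ)^(0:ℝ) ≤ 2^p := Real.rpow_le_rpow_of_exponent_le one_le_two (le_of_lt hppos)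
    rw [Real.rpow_zero] at h1
    linarith
  have hRHS0 : (0:ℝ) ≤ ((2:ℝ)^p - 1)^(2/p) * ((2:ℝ)^(2*(p-1)) * (B * Ener f)) := by
    apply mul_nonneg (Real.rpow_nonneg h2p1 _)
    apply mul_nonneg (Real.rpow_nonneg (by norm_num) _)
    exact mul_nonneg (le_of_lt hB) (hEner_nonneg f)
  have key : ENNReal.ofReal ((∑ x ∈ T, (g x)^p * μ x)^(2/p)) ≤
      ENNReal.ofReal (((2:ℝ)^p - 1)^(2/p) * ((2:ℝ)^(2*(p-1)) * (B * Ener f))) := by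
    rw [← ENNReal.ofReal_rpow_of_nonneg hL0 (by positivity)]
    calc (ENNReal.ofReal (∑ x ∈ T, (g x)^p * μ x))^(2/p)
        ≤ (ENNReal.ofReal ((2:ℝ)^p - 1) * S)^(2/p) :=
          ENNReal.rpow_le_rpow hLHS (by positivity)
      _ = (ENNReal.ofReal ((2:ℝ)^p - 1))^(2/p) * S^(2/p) :=
          ENNReal.mul_rpow_of_nonneg _ _ (by positivity)
      _ ≤ (ENNReal.ofReal ((2:ℝ)^p - 1))^(2/p) *
            ENNReal.ofReal ((2:ℝ)^(2*(p-1)) * (B * Ener f)) := mul_le_mul_right hSfin _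
      _ = ENNReal.ofReal (((2:ℝ)^p - 1)^(2/p)) *
            ENNReal.ofReal ((2:ℝ)^(2*(p-1)) * (B * Ener f)) := by
          rw [ENNReal.ofReal_rpow_of_nonneg h2p1 (by positivity)]
      _ = ENNReal.ofReal (((2:ℝ)^p - 1)^(2/p) * ((2:ℝ)^(2*(p-1)) * (B * Ener f))) :=
          (ENNReal.ofReal_mul (Real.rpow_nonneg h2p1 _)).symm
  have hfin := (ENNReal.ofReal_le_ofReal_iff hRHS0).1 key
  calc (∑ x ∈ T, (g x)^p * μ x)^(2/p)
      ≤ ((2:ℝ)^p - 1)^(2/p) * ((2:ℝ)^(2*(p-1)) * (B * Ener f)) := hfin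
    _ = ((2:ℝ)^p - 1)^(2/p) * (2:ℝ)^(2*(p-1)) * B * Ener f := by ring
end

section
/- Summing the energies of all band truncations bounds the total energy: with f_k(x) = min(max(|f(x)| − 2^k, 0), 2^k) for k ∈ ℤ, one has Σ_{k∈ℤ} Σ_{x∼y} |f_k(y) − f_k(x)|² σ_{xy} ≤ Σ_{x∼y} |f(y) − f(x)|² σ_{xy} for any finitely supported f : V → ℝ. -/
open scoped Classical

noncomputable def phiAux (k : ℤ) (t : ℝ) : ℝ := min (max (t - (2:ℝ)^k) 0) ((2:ℝ)^k)

noncomputable def GAux (a b : ℝ) (k : ℤ) : ℝ := min b ((2:ℝ)^k) - min a ((2:ℝ)^k)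

lemma phiAux_eq (k : ℤ) (a b : ℝ) (ha : 0 ≤ a) (hab : a ≤ b) :
    phiAux k b - phiAux k a = GAux a b (k+1) - GAux a b k := by
  have hc : (0:ℝ) < (2:ℝ)^k := by positivity
  have h2 : ((2:ℝ)^(k+1)) = 2 * (2:ℝ)^k := by
    rw [zpow_add_one₀ (by norm_num : (2:ℝ) ≠ 0)]; ring
  simp only [phiAux, GAux, h2]
  simp only [min_def, max_def]
  split_ifs <;> linarith

lemma GAux_nonneg (a b : ℝ) (hab : a ≤ b) (k : ℤ) : 0 ≤ GAux a b k :=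
  sub_nonneg.2 (min_le_min hab le_rfl)

lemma GAux_le (a b : ℝ) (ha : 0 ≤ a) (hab : a ≤ b) (k : ℤ) : GAux a b k ≤ b - a := by
  have hc : (0:ℝ) < (2:ℝ)^k := by positivity
  simp only [GAux, min_def]
  split_ifs <;> linarith

lemma phiAux_diff_nonneg (k : ℤ) (a b : ℝ) (hab : a ≤ b) : 0 ≤ phiAux k b - phiAux k a := by
  have : phiAux k a ≤ phiAux k b :=
    min_le_min (max_le_max (by linarith) le_rfl) le_rfl
  linarith

lemma GAux_mono (a b : ℝ) (ha : 0 ≤ a) (hab : a ≤ b) : Monotone (GAux a b) := by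
  apply monotone_int_of_le_succ
  intro n
  have := phiAux_diff_nonneg n a b hab
  have := phiAux_eq n a b ha hab
  linarith

lemma sum_phiAux_le (a b : ℝ) (ha : 0 ≤ a) (hab : a ≤ b) (s : Finset ℤ) :
    ∑ k ∈ s, (phiAux k b - phiAux k a) ≤ b - a := by
  suffices h : ∀ s : Finset ℤ, ∀ B : ℤ, (∀ k ∈ s, k < B) →
      ∑ k ∈ s, (phiAux k b - phiAux k a) ≤ GAux a b B by
    rcases s.eq_empty_or_nonempty with rfl | hs
    · simp; linarith
    · calc ∑ k ∈ s, (phiAux k b - phiAux k a) ≤ GAux a b (s.max' hs + 1) :=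
            h s _ (fun k hk => Int.lt_add_one_iff.2 (Finset.le_max' s k hk))
        _ ≤ b - a := GAux_le a b ha hab _
  intro s
  induction s using Finset.induction_on_max with
  | empty => intro B _; simp [GAux_nonneg a b hab B]
  | insert M s hM ih =>
      intro B hB
      rw [Finset.sum_insert (by intro h; exact absurd rfl (hM M h).ne)]
      have h1 : ∑ k ∈ s, (phiAux k b - phiAux k a) ≤ GAux a b M :=
        ih M (fun k hk => hM k hk)
      have h2 := phiAux_eq M a b ha hab
      have h3 : GAux a b (M+1) ≤ GAux a b B :=
        GAux_mono a b ha hab (by have := hB M (Finset.mem_insert_self M s); omega)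
      linarith

lemma sumsq_phiAux_le (a b : ℝ) (ha : 0 ≤ a) (hab : a ≤ b) (s : Finset ℤ) :
    ∑ k ∈ s, (phiAux k b - phiAux k a)^2 ≤ (b - a)^2 := by
  have hd : ∀ k ∈ s, (phiAux k b - phiAux k a)^2 ≤ (b - a) * (phiAux k b - phiAux k a) := by
    intro k _
    have h0 := phiAux_diff_nonneg k a b hab
    have hle : phiAux k b - phiAux k a ≤ b - a := by
      have := phiAux_eq k a b ha hab
      have := GAux_le a b ha hab (k+1)
      have := GAux_nonneg a b hab k
      linarith
    nlinarith
  calc ∑ k ∈ s, (phiAux k b - phiAux k a)^2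
      ≤ ∑ k ∈ s, (b - a) * (phiAux k b - phiAux k a) := Finset.sum_le_sum hd
    _ = (b - a) * ∑ k ∈ s, (phiAux k b - phiAux k a) := by rw [Finset.mul_sum]
    _ ≤ (b - a) * (b - a) :=
        mul_le_mul_of_nonneg_left (sum_phiAux_le a b ha hab s) (by linarith)
    _ = (b - a)^2 := by ring

lemma sumsq_phiAux_le' (a b : ℝ) (ha : 0 ≤ a) (hb : 0 ≤ b) (s : Finset ℤ) :
    ∑ k ∈ s, (phiAux k b - phiAux k a)^2 ≤ (b - a)^2 := by
  rcases le_total a b with h | h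
  · exact sumsq_phiAux_le a b ha h s
  · have := sumsq_phiAux_le b a hb h s
    calc ∑ k ∈ s, (phiAux k b - phiAux k a)^2
        = ∑ k ∈ s, (phiAux k a - phiAux k b)^2 := by
          apply Finset.sum_congr rfl; intro k _; ring
      _ ≤ (a - b)^2 := this
      _ = (b - a)^2 := by ring

lemma key_tsum (a b c : ℝ) (ha : 0 ≤ a) (hb : 0 ≤ b) (hc : 0 ≤ c) :
    ∑' k : ℤ, ENNReal.ofReal ((phiAux k b - phiAux k a)^2 * c)
      ≤ ENNReal.ofReal ((b - a)^2 * c) := by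
  rw [ENNReal.tsum_eq_iSup_sum]
  apply iSup_le
  intro s
  rw [← ENNReal.ofReal_sum_of_nonneg (fun k _ => by positivity)]
  apply ENNReal.ofReal_le_ofReal
  rw [← Finset.sum_mul]
  exact mul_le_mul_of_nonneg_right (sumsq_phiAux_le' a b ha hb s) hc
theorem stmt15 {V : Type*} (Γ : SimpleGraph V) [∀ v, Fintype (Γ.neighborSet v)]
    (σ : V → V → ℝ)
    (hsymm : ∀ x y, σ x y = σ y x)
    (hpos : ∀ x y, Γ.Adj x y → 0 < σ x y)
    (f : V → ℝ) (hf : (Function.support f).Finite)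
    (fk : ℤ → V → ℝ)
    (hfk : ∀ k x, fk k x = min (max (|f x| - (2 : ℝ) ^ k) 0) ((2 : ℝ) ^ k)) :
    ∑' k : ℤ, ∑' x : V, ∑ y ∈ Γ.neighborFinset x,
        ENNReal.ofReal ((fk k y - fk k x) ^ 2 * σ x y)
      ≤ ∑' x : V, ∑ y ∈ Γ.neighborFinset x, ENNReal.ofReal ((f y - f x) ^ 2 * σ x y) := by
  rw [ENNReal.tsum_comm]
  apply Summable.tsum_le_tsum _ ENNReal.summable ENNReal.summable
  intro x
  rw [Summable.tsum_finsetSum (fun y _ => ENNReal.summable)]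
  apply Finset.sum_le_sum
  intro y hy
  have hadj : Γ.Adj x y := (SimpleGraph.mem_neighborFinset Γ x y).1 hy
  have hσ : 0 ≤ σ x y := (hpos x y hadj).le
  have hfk' : ∀ k : ℤ, fk k y - fk k x = phiAux k |f y| - phiAux k |f x| := by
    intro k; rw [hfk, hfk]; rfl
  calc ∑' k : ℤ, ENNReal.ofReal ((fk k y - fk k x) ^ 2 * σ x y)
      = ∑' k : ℤ, ENNReal.ofReal ((phiAux k |f y| - phiAux k |f x|) ^ 2 * σ x y) := by
        simp only [hfk']
    _ ≤ ENNReal.ofReal ((|f y| - |f x|) ^ 2 * σ x y) :=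
        key_tsum |f x| |f y| (σ x y) (abs_nonneg _) (abs_nonneg _) hσ
    _ ≤ ENNReal.ofReal ((f y - f x) ^ 2 * σ x y) := by
        apply ENNReal.ofReal_le_ofReal
        apply mul_le_mul_of_nonneg_right _ hσ
        calc (|f y| - |f x|) ^ 2 = |(|f y| - |f x|)| ^ 2 := (sq_abs _).symm
          _ ≤ |f y - f x| ^ 2 :=
              pow_le_pow_left₀ (abs_nonneg _) (abs_abs_sub_abs_le_abs_sub _ _) 2
          _ = (f y - f x) ^ 2 := sq_abs _
end

section
/- Discrete bootstrap lemma: let (a_k)_{k∈ℤ} and (b_k)_{k∈ℤ} be nonnegative real sequences with Σ_k a_k < ∞ and Σ_k b_k < ∞, let n > 2, and suppose a_{k+1} ≤ C · b_k^{n/(n+2)} · a_k^{4/(n+2)} for all k ∈ ℤ, where C > 0. Then Σ_{k∈ℤ} a_k ≤ C^{(n+2)/(n−2)} · (Σ_{k∈ℤ} b_k)^{n/(n−2)}. -/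
theorem stmt17 (a b : ℤ → ℝ) (ha0 : ∀ k, 0 ≤ a k) (hb0 : ∀ k, 0 ≤ b k)
    (hsa : Summable a) (hsb : Summable b)
    (n C : ℝ) (hn : 2 < n) (hC : 0 < C)
    (hrec : ∀ k : ℤ, a (k + 1) ≤ C * b k ^ (n / (n + 2)) * a k ^ (4 / (n + 2))) :
    ∑' k : ℤ, a k ≤ C ^ ((n + 2) / (n - 2)) * (∑' k : ℤ, b k) ^ (n / (n - 2)) := by
  have hn2 : (0:ℝ) < n + 2 := by linarith
  have hnm2 : (0:ℝ) < n - 2 := by linarith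
  have hnpos : (0:ℝ) < n := by linarith
  set A := ∑' k : ℤ, a k with hA
  set B := ∑' k : ℤ, b k with hB
  have hA0 : 0 ≤ A := tsum_nonneg ha0
  have hB0 : 0 ≤ B := tsum_nonneg hb0
  -- conjugate exponents p = (n+2)/n, q = (n+2)/2
  have hpq : ((n+2)/n).HolderConjugate ((n+2)/2) := by
    rw [Real.holderConjugate_iff]
    constructor
    · rw [lt_div_iff₀ hnpos]; linarith
    · rw [inv_div, inv_div]; field_simp
  -- summability of a^2
  have hak_le : ∀ k, a k ≤ A := fun k =>
    Summable.le_tsum hsa k (fun j _ => ha0 j)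
  have hsa2 : Summable (fun k : ℤ => a k ^ (2:ℝ)) := by
    apply Summable.of_nonneg_of_le (fun k => Real.rpow_nonneg (ha0 k) 2)
      (fun k => ?_) (hsa.mul_left A)
    have : a k ^ (2:ℝ) = a k * a k := by
      rw [show (2:ℝ) = (2:ℕ) by norm_num, Real.rpow_natCast]; ring
    rw [this]
    exact mul_le_mul_of_nonneg_right (hak_le k) (ha0 k)
  -- f, g for Hölder
  set f := fun k : ℤ => b k ^ (n/(n+2)) with hf
  set g := fun k : ℤ => a k ^ (4/(n+2)) with hg
  have hf0 : ∀ k, 0 ≤ f k := fun k => Real.rpow_nonneg (hb0 k) _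
  have hg0 : ∀ k, 0 ≤ g k := fun k => Real.rpow_nonneg (ha0 k) _
  have hfp : ∀ k, f k ^ ((n+2)/n) = b k := by
    intro k
    show (b k ^ (n/(n+2))) ^ ((n+2)/n) = b k
    rw [← Real.rpow_mul (hb0 k), div_mul_div_comm,
      show n * (n+2) = (n+2) * n by ring, div_self (by positivity), Real.rpow_one]
  have hgq : ∀ k, g k ^ ((n+2)/2) = a k ^ (2:ℝ) := by
    intro k
    show (a k ^ (4/(n+2))) ^ ((n+2)/2) = a k ^ (2:ℝ)
    rw [← Real.rpow_mul (ha0 k)]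
    congr 1
    field_simp
    ring
  have hfsum : Summable (fun k => f k ^ ((n+2)/n)) := by
    simpa only [hfp] using hsb
  have hgsum : Summable (fun k => g k ^ ((n+2)/2)) := by
    simpa only [hgq] using hsa2
  obtain ⟨hfg_sum, hfg_le⟩ :=
    Real.summable_and_inner_le_Lp_mul_Lq_tsum_of_nonneg hpq hf0 hg0 hfsum hgsum
  -- shift: A = ∑ a (k+1)
  have hshift : A = ∑' k : ℤ, a (k + 1) := by
    rw [hA, ← (Equiv.addRight (1:ℤ)).tsum_eq a]
    rfl
  have hsash : Summable (fun k : ℤ => a (k + 1)) :=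
    (Equiv.addRight (1:ℤ)).summable_iff.mpr hsa
  -- key inequality: A ≤ C * ∑ f*g
  have key : A ≤ C * ∑' k, f k * g k := by
    rw [hshift, ← tsum_mul_left]
    apply Summable.tsum_le_tsum _ hsash (hfg_sum.mul_left C)
    intro k
    have := hrec k
    rw [mul_assoc] at this
    exact this
  -- bound ∑ a^2 ≤ A^2
  have ha2_le : ∑' k, a k ^ (2:ℝ) ≤ A ^ (2:ℝ) := by
    have h2 : ∀ x : ℝ, 0 ≤ x → x ^ (2:ℝ) = x * x := by
      intro x hx
      rw [show (2:ℝ) = (2:ℕ) by norm_num, Real.rpow_natCast]; ring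
    rw [h2 A hA0]
    calc ∑' k, a k ^ (2:ℝ) ≤ ∑' k, A * a k := by
          apply Summable.tsum_le_tsum _ hsa2 (hsa.mul_left A)
          intro k
          rw [h2 _ (ha0 k)]
          exact mul_le_mul_of_nonneg_right (hak_le k) (ha0 k)
      _ = A * A := by rw [tsum_mul_left]
  -- combine Hölder
  have hmain : A ≤ C * B ^ (n/(n+2)) * A ^ (4/(n+2)) := by
    have h1 : ∑' k, f k * g k ≤ B ^ (n/(n+2)) * A ^ (4/(n+2)) := by
      calc ∑' k, f k * g k
          ≤ (∑' k, f k ^ ((n+2)/n)) ^ (1/((n+2)/n)) *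
              (∑' k, g k ^ ((n+2)/2)) ^ (1/((n+2)/2)) := hfg_le
        _ = B ^ (n/(n+2)) * (∑' k, a k ^ (2:ℝ)) ^ (2/(n+2)) := by
            simp only [hfp, hgq, one_div, inv_div, hB]
        _ ≤ B ^ (n/(n+2)) * A ^ (4/(n+2)) := by
            apply mul_le_mul_of_nonneg_left _ (Real.rpow_nonneg hB0 _)
            calc (∑' k, a k ^ (2:ℝ)) ^ (2/(n+2))
                  ≤ (A ^ (2:ℝ)) ^ (2/(n+2)) := by
                    apply Real.rpow_le_rpow (tsum_nonneg fun k => Real.rpow_nonneg (ha0 k) _)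
                      ha2_le (by positivity)
                _ = A ^ (4/(n+2)) := by
                    rw [← Real.rpow_mul hA0]
                    ring_nf
    calc A ≤ C * ∑' k, f k * g k := key
      _ ≤ C * (B ^ (n/(n+2)) * A ^ (4/(n+2))) := by
          exact mul_le_mul_of_nonneg_left h1 hC.le
      _ = C * B ^ (n/(n+2)) * A ^ (4/(n+2)) := by ring
  -- conclude
  rcases eq_or_lt_of_le hA0 with h0 | hApos
  · rw [← h0]; positivity
  · -- A > 0: divide
    have h2 : A ^ ((n-2)/(n+2)) ≤ C * B ^ (n/(n+2)) := by
      have hA4 : (0:ℝ) < A ^ (4/(n+2)) := Real.rpow_pos_of_pos hApos _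
      rw [← mul_le_mul_iff_left₀ hA4]
      calc A ^ ((n-2)/(n+2)) * A ^ (4/(n+2))
          = A := by
            rw [← Real.rpow_add hApos]
            rw [← add_div]
            rw [show n - 2 + 4 = n + 2 by ring, div_self hn2.ne', Real.rpow_one]
        _ ≤ C * B ^ (n/(n+2)) * A ^ (4/(n+2)) := hmain
    have h3 := Real.rpow_le_rpow (Real.rpow_nonneg hA0 _) h2
      (le_of_lt (by positivity : (0:ℝ) < (n+2)/(n-2)))
    rw [← Real.rpow_mul hA0, div_mul_div_comm] at h3
    rw [show (n-2)*(n+2) = (n+2)*(n-2) by ring, div_self (by positivity),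
      Real.rpow_one] at h3
    calc A ≤ (C * B ^ (n/(n+2))) ^ ((n+2)/(n-2)) := h3
      _ = C ^ ((n+2)/(n-2)) * B ^ (n/(n-2)) := by
          rw [Real.mul_rpow hC.le (Real.rpow_nonneg hB0 _), ← Real.rpow_mul hB0]
          congr 2
          field_simp
end
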